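/- The Malvenuto–Reutenauer coproduct Δ on k[S^∞] is coassociative, with counit given by the projection onto the degree-0 component k[S_0]. -/

import Mathlib

open TensorProduct

attribute [local instance] Classical.propDecidable


open Equiv Finset

/-- `ρ` is the standardization of the subword of `σ` with values in `[a, a+m)`. -/
def IsExtract {n m : ℕ} (σ : Equiv.Perm (Fin n)) (a : ℕ) (ρ : Equiv.Perm (Fin m)) : Prop :=
  ∃ f : Fin m → Fin n, StrictMono f ∧ ∀ j, ((σ (f j) : ℕ)) = a + (ρ j : ℕ)

lemma card_interval_filter {n : ℕ} (σ : Equiv.Perm (Fin n)) {a m : ℕ} (h : a + m ≤ n) :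
    (Finset.univ.filter (fun x : Fin n => a ≤ ((σ x : ℕ)) ∧ ((σ x : ℕ)) < a + m)).card = m := by
  have key : (Finset.univ.filter
      (fun x : Fin n => a ≤ ((σ x : ℕ)) ∧ ((σ x : ℕ)) < a + m)).card
      = (Finset.univ : Finset (Fin m)).card := by
    refine Finset.card_bij' (fun x hx => (⟨(σ x : ℕ) - a, by
        simp only [Finset.mem_filter] at hx; omega⟩ : Fin m))
      (fun y _ => σ.symm ⟨a + (y : ℕ), by omega⟩) ?_ ?_ ?_ ?_
    · intro x hx
      exact Finset.mem_univ _
    · intro y hy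
      simp only [Finset.mem_filter, Finset.mem_univ, true_and, Equiv.apply_symm_apply]
      exact ⟨by omega, by omega⟩
    · intro x hx
      simp only [Finset.mem_filter, Finset.mem_univ, true_and] at hx
      rw [Equiv.symm_apply_eq, Fin.ext_iff]
      simp only [Fin.val_mk]
      omega
    · intro y hy
      rw [Fin.ext_iff]
      simp only [Equiv.apply_symm_apply]
      omega
  simpa using key

lemma extract_bound {n m : ℕ} {σ : Equiv.Perm (Fin n)} {a : ℕ} {ρ : Equiv.Perm (Fin m)}
    (hm : 0 < m) (h : IsExtract σ a ρ) : a + m ≤ n := by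
  rcases h with ⟨f, hf, hv⟩
  obtain ⟨j, hj⟩ : ∃ j, (ρ j : ℕ) = m - 1 := ⟨ρ.symm ⟨m - 1, by omega⟩, by simp⟩
  have := hv j
  have := (σ (f j)).isLt
  omega

lemma extract_witness_unique {n m : ℕ} (σ : Equiv.Perm (Fin n)) {a : ℕ}
    {f f' : Fin m → Fin n} {ρ ρ' : Equiv.Perm (Fin m)}
    (hf : StrictMono f) (hv : ∀ j, ((σ (f j) : ℕ)) = a + (ρ j : ℕ))
    (hf' : StrictMono f') (hv' : ∀ j, ((σ (f' j) : ℕ)) = a + (ρ' j : ℕ)) :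
    f = f' ∧ ρ = ρ' := by
  rcases Nat.eq_zero_or_pos m with hm | hm
  · subst hm
    exact ⟨funext fun j => j.elim0, Subsingleton.elim _ _⟩
  have hb : a + m ≤ n := extract_bound hm ⟨f, hf, hv⟩
  have hS := card_interval_filter σ hb
  have hmem : ∀ j, f j ∈ Finset.univ.filter
      (fun x : Fin n => a ≤ ((σ x : ℕ)) ∧ ((σ x : ℕ)) < a + m) := by
    intro j
    simp only [Finset.mem_filter, Finset.mem_univ, true_and]
    have := hv j; have := (ρ j).isLt; omega
  have hmem' : ∀ j, f' j ∈ Finset.univ.filter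
      (fun x : Fin n => a ≤ ((σ x : ℕ)) ∧ ((σ x : ℕ)) < a + m) := by
    intro j
    simp only [Finset.mem_filter, Finset.mem_univ, true_and]
    have := hv' j; have := (ρ' j).isLt; omega
  have e1 := Finset.orderEmbOfFin_unique hS hmem hf
  have e2 := Finset.orderEmbOfFin_unique hS hmem' hf'
  have hff : f = f' := e1.trans e2.symm
  refine ⟨hff, Equiv.ext fun j => ?_⟩
  have h1 := hv j
  have h2 := hv' j
  rw [hff] at h1
  exact Fin.ext (by omega)

lemma isExtract_unique {n m : ℕ} {σ : Equiv.Perm (Fin n)} {a : ℕ}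
    {ρ ρ' : Equiv.Perm (Fin m)} (h : IsExtract σ a ρ) (h' : IsExtract σ a ρ') : ρ = ρ' := by
  rcases h with ⟨f, hf, hv⟩
  rcases h' with ⟨f', hf', hv'⟩
  exact (extract_witness_unique σ hf hv hf' hv').2

lemma isExtract_exists {n : ℕ} (σ : Equiv.Perm (Fin n)) {a m : ℕ} (h : a + m ≤ n) :
    ∃ ρ : Equiv.Perm (Fin m), IsExtract σ a ρ := by
  have hS := card_interval_filter σ h
  set S := Finset.univ.filter (fun x : Fin n => a ≤ ((σ x : ℕ)) ∧ ((σ x : ℕ)) < a + m) with hSdef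
  have hmem : ∀ j : Fin m, S.orderEmbOfFin hS j ∈ S := fun j => Finset.orderEmbOfFin_mem S hS j
  have hbd : ∀ j : Fin m, a ≤ (σ (S.orderEmbOfFin hS j) : ℕ) ∧
      (σ (S.orderEmbOfFin hS j) : ℕ) < a + m := by
    intro j
    have := hmem j
    simpa only [hSdef, Finset.mem_filter, Finset.mem_univ, true_and] using this
  set g : Fin m → Fin m := fun j => ⟨(σ (S.orderEmbOfFin hS j) : ℕ) - a, by
    have := hbd j; omega⟩ with hg
  have hginj : Function.Injective g := by
    intro j j' hjj
    have h1 := hbd j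
    have h2 := hbd j'
    have : (σ (S.orderEmbOfFin hS j) : ℕ) = (σ (S.orderEmbOfFin hS j') : ℕ) := by
      have := Fin.mk.injEq _ _ _ _ ▸ hjj
      simp only [hg, Fin.mk.injEq] at hjj
      omega
    exact (S.orderEmbOfFin hS).injective (σ.injective (Fin.ext this))
  refine ⟨Equiv.ofBijective g (Finite.injective_iff_bijective.mp hginj), S.orderEmbOfFin hS,
    (S.orderEmbOfFin hS).strictMono, fun j => ?_⟩
  have := hbd j
  simp only [Equiv.ofBijective_apply, hg]
  omega

noncomputable def extractP {n : ℕ} (σ : Equiv.Perm (Fin n)) (a m : ℕ) : Equiv.Perm (Fin m) :=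
  if h : ∃ ρ : Equiv.Perm (Fin m), IsExtract σ a ρ then h.choose else 1

lemma isExtract_extractP {n : ℕ} (σ : Equiv.Perm (Fin n)) {a m : ℕ} (h : a + m ≤ n) :
    IsExtract σ a (extractP σ a m) := by
  rw [extractP, dif_pos (isExtract_exists σ h)]
  exact (isExtract_exists σ h).choose_spec

lemma extractP_eq {n m : ℕ} {σ : Equiv.Perm (Fin n)} {a : ℕ} {ρ : Equiv.Perm (Fin m)}
    (h : IsExtract σ a ρ) : extractP σ a m = ρ := by
  rw [extractP, dif_pos ⟨ρ, h⟩]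
  exact isExtract_unique (⟨ρ, h⟩ : ∃ ρ, IsExtract σ a ρ).choose_spec h

lemma IsExtract.trans {n m l : ℕ} {σ : Equiv.Perm (Fin n)} {τ : Equiv.Perm (Fin m)}
    {ρ : Equiv.Perm (Fin l)} {a b : ℕ}
    (h1 : IsExtract σ a τ) (h2 : IsExtract τ b ρ) : IsExtract σ (a + b) ρ := by
  rcases h1 with ⟨f, hf, hv⟩
  rcases h2 with ⟨g, hg, hw⟩
  exact ⟨f ∘ g, hf.comp hg, fun j => by simp only [Function.comp_apply, hv, hw]; omega⟩

lemma isExtract_self {n : ℕ} (σ : Equiv.Perm (Fin n)) : IsExtract σ 0 σ :=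
  ⟨id, strictMono_id, fun j => by simp⟩

lemma isExtract_permCongr {n n' m : ℕ} (h : n = n') (σ : Equiv.Perm (Fin n)) {a : ℕ}
    (ρ : Equiv.Perm (Fin m)) :
    IsExtract ((finCongr h).permCongr σ) a ρ ↔ IsExtract σ a ρ := by
  subst h
  simp [finCongr_refl]
  exact Iff.rfl

/-- `w` is a `(p, n-p)`-shuffle in `S_n`. -/
def IsShuffle (p : ℕ) {n : ℕ} (w : Equiv.Perm (Fin n)) : Prop :=
  ∀ a b : Fin n, a < b → ((b : ℕ) < p ∨ p ≤ (a : ℕ)) → w a < w b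

/-- The block permutation `ρ × σ ∈ S_{p+q}`. -/
def blockPerm {p q : ℕ} (ρ : Equiv.Perm (Fin p)) (σ : Equiv.Perm (Fin q)) :
    Equiv.Perm (Fin (p + q)) :=
  finSumFinEquiv.permCongr (Equiv.sumCongr ρ σ)

lemma blockPerm_castAdd {p q : ℕ} (ρ : Equiv.Perm (Fin p)) (σ : Equiv.Perm (Fin q)) (j : Fin p) :
    blockPerm ρ σ (Fin.castAdd q j) = Fin.castAdd q (ρ j) := by
  simp [blockPerm, Equiv.permCongr_apply, finSumFinEquiv_symm_apply_castAdd]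

lemma blockPerm_natAdd {p q : ℕ} (ρ : Equiv.Perm (Fin p)) (σ : Equiv.Perm (Fin q)) (j : Fin q) :
    blockPerm ρ σ (Fin.natAdd p j) = Fin.natAdd p (σ j) := by
  simp [blockPerm, Equiv.permCongr_apply, finSumFinEquiv_symm_apply_natAdd]

/-- The property required of a triple in the MR coproduct. -/
def TripleProp (p q : ℕ) (σ : Equiv.Perm (Fin (p + q)))
    (d : Equiv.Perm (Fin p) × Equiv.Perm (Fin q) × Equiv.Perm (Fin (p + q))) : Prop :=
  IsShuffle p d.2.2 ∧ σ = blockPerm d.1 d.2.1 * d.2.2⁻¹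

lemma tripleProp_iff {p q : ℕ} (σ : Equiv.Perm (Fin (p + q)))
    (d : Equiv.Perm (Fin p) × Equiv.Perm (Fin q) × Equiv.Perm (Fin (p + q))) :
    TripleProp p q σ d ↔ IsShuffle p d.2.2 ∧ σ * d.2.2 = blockPerm d.1 d.2.1 := by
  unfold TripleProp
  constructor
  · rintro ⟨h1, h2⟩
    exact ⟨h1, by rw [h2, inv_mul_cancel_right]⟩
  · rintro ⟨h1, h2⟩
    exact ⟨h1, by rw [← h2, mul_inv_cancel_right]⟩

lemma tripleProp_lower {p q : ℕ} {σ : Equiv.Perm (Fin (p + q))}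
    {d : Equiv.Perm (Fin p) × Equiv.Perm (Fin q) × Equiv.Perm (Fin (p + q))}
    (h : TripleProp p q σ d) :
    StrictMono (fun j : Fin p => d.2.2 (Fin.castAdd q j)) ∧
    ∀ j, ((σ (d.2.2 (Fin.castAdd q j)) : ℕ)) = 0 + (d.1 j : ℕ) := by
  rw [tripleProp_iff] at h
  obtain ⟨hsh, heq⟩ := h
  constructor
  · intro j j' hjj
    have h1 : (Fin.castAdd q j) < (Fin.castAdd q j') := by
      rw [Fin.lt_def] at hjj ⊢
      simpa using hjj
    exact hsh _ _ h1 (Or.inl (by simpa using j'.isLt))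
  · intro j
    have h2 : σ (d.2.2 (Fin.castAdd q j)) = blockPerm d.1 d.2.1 (Fin.castAdd q j) := by
      rw [← Equiv.Perm.mul_apply, heq]
    simp only [h2, blockPerm_castAdd, Fin.coe_castAdd, Nat.zero_add]

lemma tripleProp_upper {p q : ℕ} {σ : Equiv.Perm (Fin (p + q))}
    {d : Equiv.Perm (Fin p) × Equiv.Perm (Fin q) × Equiv.Perm (Fin (p + q))}
    (h : TripleProp p q σ d) :
    StrictMono (fun j : Fin q => d.2.2 (Fin.natAdd p j)) ∧
    ∀ j, ((σ (d.2.2 (Fin.natAdd p j)) : ℕ)) = p + (d.2.1 j : ℕ) := by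
  rw [tripleProp_iff] at h
  obtain ⟨hsh, heq⟩ := h
  constructor
  · intro j j' hjj
    have h1 : (Fin.natAdd p j) < (Fin.natAdd p j') := by
      rw [Fin.lt_def] at hjj ⊢
      simpa using hjj
    exact hsh _ _ h1 (Or.inr (by simp))
  · intro j
    have h2 : σ (d.2.2 (Fin.natAdd p j)) = blockPerm d.1 d.2.1 (Fin.natAdd p j) := by
      rw [← Equiv.Perm.mul_apply, heq]
    simp only [h2, blockPerm_natAdd, Fin.coe_natAdd]

lemma isExtract_of_tripleProp_lower {p q : ℕ} {σ : Equiv.Perm (Fin (p + q))}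
    {d : Equiv.Perm (Fin p) × Equiv.Perm (Fin q) × Equiv.Perm (Fin (p + q))}
    (h : TripleProp p q σ d) : IsExtract σ 0 d.1 :=
  ⟨_, (tripleProp_lower h).1, (tripleProp_lower h).2⟩

lemma isExtract_of_tripleProp_upper {p q : ℕ} {σ : Equiv.Perm (Fin (p + q))}
    {d : Equiv.Perm (Fin p) × Equiv.Perm (Fin q) × Equiv.Perm (Fin (p + q))}
    (h : TripleProp p q σ d) : IsExtract σ p d.2.1 :=
  ⟨_, (tripleProp_upper h).1, (tripleProp_upper h).2⟩

lemma tripleProp_unique {p q : ℕ} (σ : Equiv.Perm (Fin (p + q)))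
    {d d' : Equiv.Perm (Fin p) × Equiv.Perm (Fin q) × Equiv.Perm (Fin (p + q))}
    (h : TripleProp p q σ d) (h' : TripleProp p q σ d') : d = d' := by
  obtain ⟨hfL, hvL⟩ := tripleProp_lower h
  obtain ⟨hfL', hvL'⟩ := tripleProp_lower h'
  obtain ⟨hfU, hvU⟩ := tripleProp_upper h
  obtain ⟨hfU', hvU'⟩ := tripleProp_upper h'
  obtain ⟨heL, hL⟩ := extract_witness_unique σ hfL hvL hfL' hvL'
  obtain ⟨heU, hU⟩ := extract_witness_unique σ hfU hvU hfU' hvU'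
  have hw : d.2.2 = d'.2.2 := by
    apply Equiv.ext
    intro x
    refine Fin.addCases (fun j => ?_) (fun j => ?_) x
    · exact congrFun heL j
    · exact congrFun heU j
  exact Prod.ext hL (Prod.ext hU hw)

lemma tripleProp_exists {p q : ℕ} (σ : Equiv.Perm (Fin (p + q))) :
    ∃ d : Equiv.Perm (Fin p) × Equiv.Perm (Fin q) × Equiv.Perm (Fin (p + q)),
      TripleProp p q σ d ∧ d.1 = extractP σ 0 p ∧ d.2.1 = extractP σ p q := by
  obtain ⟨f, hf, hvf⟩ := isExtract_extractP σ (a := 0) (m := p) (by omega)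
  obtain ⟨g, hg, hvg⟩ := isExtract_extractP σ (a := p) (m := q) (by omega)
  set ρ := extractP σ 0 p
  set σ' := extractP σ p q
  set W : Fin (p + q) → Fin (p + q) := fun x => Sum.elim f g (finSumFinEquiv.symm x) with hW
  have hWcast : ∀ j : Fin p, W (Fin.castAdd q j) = f j := by
    intro j
    simp [hW, finSumFinEquiv_symm_apply_castAdd]
  have hWnat : ∀ j : Fin q, W (Fin.natAdd p j) = g j := by
    intro j
    simp [hW, finSumFinEquiv_symm_apply_natAdd]
  have hcast : ∀ (x : Fin (p + q)) (h : (x : ℕ) < p), W x = f ⟨(x : ℕ), h⟩ := by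
    intro x h
    have h2 : x = Fin.castAdd q ⟨(x : ℕ), h⟩ := Fin.ext rfl
    rw [congrArg W h2, hWcast]
  have hnat : ∀ (x : Fin (p + q)) (h : p ≤ (x : ℕ)), W x = g ⟨(x : ℕ) - p, by omega⟩ := by
    intro x h
    have h2 : x = Fin.natAdd p ⟨(x : ℕ) - p, by omega⟩ := Fin.ext (by simp; omega)
    rw [congrArg W h2, hWnat]
  have hWinj : Function.Injective W := by
    intro x y hxy
    by_cases hx : (x : ℕ) < p <;> by_cases hy : (y : ℕ) < p
    · rw [hcast x hx, hcast y hy] at hxy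
      have := hf.injective hxy
      exact Fin.ext (by simpa [Fin.ext_iff] using this)
    · rw [hcast x hx, hnat y (by omega)] at hxy
      have h1 := hvf ⟨(x : ℕ), hx⟩
      have h2 := hvg ⟨(y : ℕ) - p, by omega⟩
      rw [hxy] at h1
      have := (ρ ⟨(x : ℕ), hx⟩).isLt
      omega
    · rw [hnat x (by omega), hcast y hy] at hxy
      have h1 := hvf ⟨(y : ℕ), hy⟩
      have h2 := hvg ⟨(x : ℕ) - p, by omega⟩
      rw [← hxy] at h1
      have := (ρ ⟨(y : ℕ), hy⟩).isLt
      omega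
    · rw [hnat x (by omega), hnat y (by omega)] at hxy
      have := hg.injective hxy
      have := Fin.mk.injEq _ _ _ _ ▸ this
      exact Fin.ext (by omega)
  set w : Equiv.Perm (Fin (p + q)) := Equiv.ofBijective W (Finite.injective_iff_bijective.mp hWinj)
    with hw
  have hwapp : ∀ x, w x = W x := fun x => rfl
  have hshuffle : IsShuffle p w := by
    intro a b hab hcond
    rw [Fin.lt_def] at hab
    rcases hcond with hb | ha
    · have ha : (a : ℕ) < p := by omega
      rw [Fin.lt_def, hwapp, hwapp, hcast a ha, hcast b hb]
      exact Fin.lt_def.mp (hf (Fin.mk_lt_mk.mpr (by omega)))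
    · have hb : p ≤ (b : ℕ) := by omega
      rw [Fin.lt_def, hwapp, hwapp, hnat a ha, hnat b hb]
      exact Fin.lt_def.mp (hg (Fin.mk_lt_mk.mpr (by omega)))
  refine ⟨(ρ, σ', w), ?_, rfl, rfl⟩
  rw [tripleProp_iff]
  refine ⟨hshuffle, ?_⟩
  apply Equiv.ext
  intro x
  refine Fin.addCases (fun j => ?_) (fun j => ?_) x
  · rw [Equiv.Perm.mul_apply, hwapp, hWcast, blockPerm_castAdd]
    exact Fin.ext (by simpa using hvf j)
  · rw [Equiv.Perm.mul_apply, hwapp, hWnat, blockPerm_natAdd]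
    exact Fin.ext (by simpa using hvg j)

/-- Basis of `k[S^∞]`: permutations of all finite orders. -/
abbrev PermSigma : Type := Σ n : ℕ, Equiv.Perm (Fin n)

/-- The graded vector space `k[S^∞] = ⊕_{n ≥ 0} k[S_n]`. -/
abbrev MR (k : Type*) [Field k] : Type _ := PermSigma →₀ k

/-- The Malvenuto-Reutenauer coproduct on a basis element `σ ∈ S_n`:
`Δσ = Σ_{i=0}^{n} σ_i ⊗ σ'_{n-i}`, where `(σ_i, σ'_{n-i}, w)` is the unique triple with
`w` an `(i, n-i)`-shuffle and `σ = (σ_i × σ'_{n-i}) ∘ w⁻¹` (the sum below ranges over all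
such triples, of which there is exactly one for each `i`). -/
noncomputable def mrCoprodBasis (k : Type*) [Field k] (x : PermSigma) :
    MR k ⊗[k] MR k :=
  ∑ i ∈ (Finset.range (x.1 + 1)).attach,
    ∑ d ∈ (Finset.univ : Finset (Equiv.Perm (Fin (i : ℕ)) ×
          Equiv.Perm (Fin (x.1 - (i : ℕ))) ×
          Equiv.Perm (Fin ((i : ℕ) + (x.1 - (i : ℕ)))))).filter
        (fun d => IsShuffle (i : ℕ) d.2.2 ∧
          x.2 = (finCongr (Nat.add_sub_cancel'
              (Nat.lt_succ_iff.mp (Finset.mem_range.mp i.2)))).permCongr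
            (blockPerm d.1 d.2.1 * d.2.2⁻¹)),
      Finsupp.single (⟨(i : ℕ), d.1⟩ : PermSigma) (1 : k) ⊗ₜ[k]
        Finsupp.single (⟨x.1 - (i : ℕ), d.2.1⟩ : PermSigma) (1 : k)

/-- The Malvenuto-Reutenauer coproduct, extended linearly to `k[S^∞]`. -/
noncomputable def mrCoprodL (k : Type*) [Field k] : MR k →ₗ[k] MR k ⊗[k] MR k :=
  Finsupp.lsum k fun x => LinearMap.toSpanSingleton k (MR k ⊗[k] MR k) (mrCoprodBasis k x)

/-- The counit: projection onto the degree-0 component (the coefficient of the empty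
permutation). -/
noncomputable def mrCounit (k : Type*) [Field k] : MR k →ₗ[k] k :=
  Finsupp.lapply (⟨0, (1 : Equiv.Perm (Fin 0))⟩ : PermSigma)

lemma permCongr_eq_iff {n n' : ℕ} (h : n' = n) (σ : Equiv.Perm (Fin n))
    (W : Equiv.Perm (Fin n')) :
    σ = (finCongr h).permCongr W ↔ (finCongr h.symm).permCongr σ = W := by
  subst h
  have h1 : ∀ (V : Equiv.Perm (Fin n')) (hh : n' = n'), (finCongr hh).permCongr V = V := by
    intro V hh
    apply Equiv.ext
    intro y
    simp [Equiv.permCongr_apply]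
  rw [h1, h1]

lemma mrCoprodBasis_eq (k : Type*) [Field k] (x : PermSigma) :
    mrCoprodBasis k x = ∑ i ∈ Finset.range (x.1 + 1),
      Finsupp.single (⟨i, extractP x.2 0 i⟩ : PermSigma) (1 : k) ⊗ₜ[k]
        Finsupp.single (⟨x.1 - i, extractP x.2 i (x.1 - i)⟩ : PermSigma) (1 : k) := by
  rw [mrCoprodBasis, ← Finset.sum_attach (Finset.range (x.1 + 1))
    (fun i => Finsupp.single (⟨i, extractP x.2 0 i⟩ : PermSigma) (1 : k) ⊗ₜ[k]
        Finsupp.single (⟨x.1 - i, extractP x.2 i (x.1 - i)⟩ : PermSigma) (1 : k))]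
  refine Finset.sum_congr rfl (fun i _ => ?_)
  have hile : (i : ℕ) ≤ x.1 := Nat.lt_succ_iff.mp (Finset.mem_range.mp i.2)
  set h : (i : ℕ) + (x.1 - (i : ℕ)) = x.1 := Nat.add_sub_cancel' hile with hdef
  set σt : Equiv.Perm (Fin ((i : ℕ) + (x.1 - (i : ℕ)))) := (finCongr h.symm).permCongr x.2
    with hσt
  obtain ⟨d0, hd0, hd01, hd02⟩ := tripleProp_exists σt
  have hiff : ∀ d, (IsShuffle (i : ℕ) d.2.2 ∧
      x.2 = (finCongr (Nat.add_sub_cancel'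
          (Nat.lt_succ_iff.mp (Finset.mem_range.mp i.2)))).permCongr
        (blockPerm d.1 d.2.1 * d.2.2⁻¹)) ↔ TripleProp (i : ℕ) (x.1 - (i : ℕ)) σt d := by
    intro d
    unfold TripleProp
    rw [permCongr_eq_iff]
  have hsingle : Finset.filter
      (fun d => IsShuffle (i : ℕ) d.2.2 ∧
        x.2 = (finCongr (Nat.add_sub_cancel'
            (Nat.lt_succ_iff.mp (Finset.mem_range.mp i.2)))).permCongr
          (blockPerm d.1 d.2.1 * d.2.2⁻¹)) Finset.univ = {d0} := by
    rw [Finset.eq_singleton_iff_unique_mem]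
    constructor
    · rw [Finset.mem_filter]
      exact ⟨Finset.mem_univ _, (hiff d0).mpr hd0⟩
    · intro b hb
      rw [Finset.mem_filter] at hb
      exact tripleProp_unique σt ((hiff b).mp hb.2) hd0
  rw [hsingle, Finset.sum_singleton]
  have hext : ∀ {m a : ℕ} (ρ : Equiv.Perm (Fin m)), IsExtract σt a ρ ↔ IsExtract x.2 a ρ := by
    intro m a ρ
    rw [hσt]
    exact isExtract_permCongr h.symm x.2 ρ
  have e1 : d0.1 = extractP x.2 0 (i : ℕ) := by
    rw [hd01]
    exact (extractP_eq ((hext _).mp (isExtract_extractP σt (by omega)))).symm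
  have e2 : d0.2.1 = extractP x.2 (i : ℕ) (x.1 - (i : ℕ)) := by
    rw [hd02]
    exact (extractP_eq ((hext _).mp (isExtract_extractP σt (by omega)))).symm
  rw [e1, e2]

lemma extractP_comp {n q m a b : ℕ} (σ : Equiv.Perm (Fin n)) (h1 : a + q ≤ n) (h2 : b + m ≤ q) :
    extractP (extractP σ a q) b m = extractP σ (a + b) m :=
  (extractP_eq ((isExtract_extractP σ h1).trans (isExtract_extractP _ h2))).symm

lemma mrCoprodL_single (k : Type*) [Field k] (x : PermSigma) (c : k) :
    mrCoprodL k (Finsupp.single x c) = c • mrCoprodBasis k x := by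
  rw [mrCoprodL, Finsupp.lsum_single, LinearMap.toSpanSingleton_apply]

lemma mrCoprodBasis_eq' (k : Type*) [Field k] (m : ℕ) (ρ : Equiv.Perm (Fin m)) :
    mrCoprodBasis k (⟨m, ρ⟩ : PermSigma) = ∑ i ∈ Finset.range (m + 1),
      Finsupp.single (⟨i, extractP ρ 0 i⟩ : PermSigma) (1 : k) ⊗ₜ[k]
        Finsupp.single (⟨m - i, extractP ρ i (m - i)⟩ : PermSigma) (1 : k) :=
  mrCoprodBasis_eq k ⟨m, ρ⟩

set_option synthInstance.maxHeartbeats 1000000 in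
lemma coassoc_basis (k : Type*) [Field k] (x : PermSigma) :
    (TensorProduct.assoc k (MR k) (MR k) (MR k))
      ((TensorProduct.map (mrCoprodL k) LinearMap.id) (mrCoprodBasis k x)) =
    (TensorProduct.map LinearMap.id (mrCoprodL k)) (mrCoprodBasis k x) := by
  obtain ⟨n, σ⟩ := x
  have lhs : (TensorProduct.assoc k (MR k) (MR k) (MR k))
      ((TensorProduct.map (mrCoprodL k) LinearMap.id)
        (mrCoprodBasis k (⟨n, σ⟩ : PermSigma))) =
      ∑ i ∈ Finset.range (n + 1), ∑ j ∈ Finset.range (i + 1),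
        Finsupp.single (⟨j, extractP σ 0 j⟩ : PermSigma) (1 : k) ⊗ₜ[k]
          (Finsupp.single (⟨i - j, extractP σ j (i - j)⟩ : PermSigma) (1 : k) ⊗ₜ[k]
            Finsupp.single (⟨n - i, extractP σ (j + (i - j)) (n - i)⟩ : PermSigma) (1 : k)) := by
    rw [mrCoprodBasis_eq', map_sum, map_sum]
    refine Finset.sum_congr rfl (fun i hi => ?_)
    rw [Finset.mem_range] at hi
    rw [TensorProduct.map_tmul, mrCoprodL_single, one_smul, LinearMap.id_coe, id_eq,
      mrCoprodBasis_eq', TensorProduct.sum_tmul, map_sum]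
    refine Finset.sum_congr rfl (fun j hj => ?_)
    rw [Finset.mem_range] at hj
    rw [TensorProduct.assoc_tmul, extractP_comp σ (by omega) (by omega),
      extractP_comp σ (by omega) (by omega), Nat.zero_add, Nat.zero_add,
      show j + (i - j) = i from by omega]
  have rhs : (TensorProduct.map LinearMap.id (mrCoprodL k))
      (mrCoprodBasis k (⟨n, σ⟩ : PermSigma)) =
      ∑ i ∈ Finset.range (n + 1), ∑ l ∈ Finset.range (n - i + 1),
        Finsupp.single (⟨i, extractP σ 0 i⟩ : PermSigma) (1 : k) ⊗ₜ[k]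
          (Finsupp.single (⟨l, extractP σ i l⟩ : PermSigma) (1 : k) ⊗ₜ[k]
            Finsupp.single (⟨n - i - l, extractP σ (i + l) (n - i - l)⟩ : PermSigma) (1 : k)) := by
    rw [mrCoprodBasis_eq', map_sum]
    refine Finset.sum_congr rfl (fun i hi => ?_)
    rw [Finset.mem_range] at hi
    rw [TensorProduct.map_tmul, mrCoprodL_single, one_smul, LinearMap.id_coe, id_eq,
      mrCoprodBasis_eq', TensorProduct.tmul_sum]
    refine Finset.sum_congr rfl (fun l hl => ?_)
    rw [Finset.mem_range] at hl
    rw [extractP_comp σ (by omega) (by omega), extractP_comp σ (by omega) (by omega),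
      Nat.add_zero]
  rw [lhs, rhs]
  refine Eq.trans (Finset.sum_sigma' _ _ _)
    (Eq.trans ?_ (Finset.sum_sigma' _ _ _).symm)
  refine Finset.sum_nbij' (fun z => ⟨z.2, z.1 - z.2⟩) (fun z => ⟨z.1 + z.2, z.1⟩)
    ?_ ?_ ?_ ?_ ?_
  · rintro ⟨i, j⟩ hz
    simp only [Finset.mem_sigma, Finset.mem_range] at hz ⊢
    omega
  · rintro ⟨i, l⟩ hz
    simp only [Finset.mem_sigma, Finset.mem_range] at hz ⊢
    omega
  · rintro ⟨i, j⟩ hz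
    simp only [Finset.mem_sigma, Finset.mem_range] at hz
    exact Sigma.ext (show j + (i - j) = i by omega) (heq_of_eq (show j = j from rfl))
  · rintro ⟨i, l⟩ hz
    simp only [Finset.mem_sigma, Finset.mem_range] at hz
    exact Sigma.ext (show i = i from rfl) (heq_of_eq (show i + l - i = l by omega))
  · rintro ⟨i, j⟩ hz
    simp only [Finset.mem_sigma, Finset.mem_range] at hz
    rw [show j + (i - j) = i from by omega, show n - j - (i - j) = n - i from by omega]

instance : Subsingleton (Equiv.Perm (Fin 0)) := ⟨fun a b => Equiv.ext fun x => x.elim0⟩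

set_option synthInstance.maxHeartbeats 1000000 in
lemma counit_left_basis (k : Type*) [Field k] (x : PermSigma) :
    (TensorProduct.lid k (MR k))
      ((TensorProduct.map (mrCounit k) LinearMap.id) (mrCoprodBasis k x)) =
    Finsupp.single x (1 : k) := by
  obtain ⟨n, σ⟩ := x
  have hsum : ∀ (s : Finset ℕ) (F : ℕ → k ⊗[k] MR k),
      (TensorProduct.lid k (MR k)) (∑ i ∈ s, F i)
        = ∑ i ∈ s, (TensorProduct.lid k (MR k)) (F i) := fun s F =>
    map_sum ((TensorProduct.lid k (MR k)) : k ⊗[k] MR k →ₗ[k] MR k) F s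
  rw [mrCoprodBasis_eq', map_sum, hsum]
  refine Eq.trans (Finset.sum_eq_single_of_mem 0 (Finset.mem_range.mpr (by omega)) ?_) ?_
  · intro b _ hbne
    rw [TensorProduct.map_tmul, TensorProduct.lid_tmul]
    have h0 : mrCounit k (Finsupp.single (⟨b, extractP σ 0 b⟩ : PermSigma) (1 : k)) = 0 := by
      rw [mrCounit, Finsupp.lapply_apply, Finsupp.single_apply, if_neg]
      intro hcontra
      exact hbne (congrArg Sigma.fst hcontra)
    rw [h0, zero_smul]
  · rw [TensorProduct.map_tmul, TensorProduct.lid_tmul]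
    have h1 : mrCounit k (Finsupp.single (⟨0, extractP σ 0 0⟩ : PermSigma) (1 : k)) = 1 := by
      have he : (⟨0, extractP σ 0 0⟩ : PermSigma) = ⟨0, 1⟩ :=
        Sigma.ext rfl (heq_of_eq (Subsingleton.elim _ _))
      rw [mrCounit, Finsupp.lapply_apply, he, Finsupp.single_eq_same]
    rw [h1, one_smul, LinearMap.id_coe, id_eq]
    have h2 : (⟨n - 0, extractP σ 0 (n - 0)⟩ : PermSigma) = ⟨n, σ⟩ := by
      simp only [Nat.sub_zero]
      exact Sigma.ext rfl (heq_of_eq (extractP_eq (isExtract_self σ)))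
    rw [h2]

set_option synthInstance.maxHeartbeats 1000000 in
lemma counit_right_basis (k : Type*) [Field k] (x : PermSigma) :
    (TensorProduct.rid k (MR k))
      ((TensorProduct.map LinearMap.id (mrCounit k)) (mrCoprodBasis k x)) =
    Finsupp.single x (1 : k) := by
  obtain ⟨n, σ⟩ := x
  have hsum : ∀ (s : Finset ℕ) (F : ℕ → MR k ⊗[k] k),
      (TensorProduct.rid k (MR k)) (∑ i ∈ s, F i)
        = ∑ i ∈ s, (TensorProduct.rid k (MR k)) (F i) := fun s F =>
    map_sum ((TensorProduct.rid k (MR k)) : MR k ⊗[k] k →ₗ[k] MR k) F s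
  rw [mrCoprodBasis_eq', map_sum, hsum]
  refine Eq.trans (Finset.sum_eq_single_of_mem n (Finset.mem_range.mpr (by omega)) ?_) ?_
  · intro b hb hbne
    rw [Finset.mem_range] at hb
    rw [TensorProduct.map_tmul, TensorProduct.rid_tmul]
    have h0 : mrCounit k (Finsupp.single (⟨n - b, extractP σ b (n - b)⟩ : PermSigma)
        (1 : k)) = 0 := by
      rw [mrCounit, Finsupp.lapply_apply, Finsupp.single_apply, if_neg]
      intro hcontra
      have h3 : n - b = 0 := congrArg Sigma.fst hcontra
      omega
    rw [h0, zero_smul]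
  · rw [TensorProduct.map_tmul, TensorProduct.rid_tmul]
    have h1 : mrCounit k (Finsupp.single (⟨n - n, extractP σ n (n - n)⟩ : PermSigma)
        (1 : k)) = 1 := by
      have he : (⟨n - n, extractP σ n (n - n)⟩ : PermSigma) = ⟨0, 1⟩ := by
        haveI : Subsingleton (Equiv.Perm (Fin (n - n))) := by
          rw [Nat.sub_self]; infer_instance
        exact Sigma.ext (Nat.sub_self n)
          (Subsingleton.helim (congrArg (fun m => Equiv.Perm (Fin m)) (Nat.sub_self n)) _ _)
      rw [mrCounit, Finsupp.lapply_apply, he, Finsupp.single_eq_same]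
    rw [h1, one_smul, LinearMap.id_coe, id_eq]
    have h2 : (⟨n, extractP σ 0 n⟩ : PermSigma) = ⟨n, σ⟩ :=
      Sigma.ext rfl (heq_of_eq (extractP_eq (isExtract_self σ)))
    rw [h2]

set_option synthInstance.maxHeartbeats 1000000 in
/-- the Malvenuto-Reutenauer coproduct is coassociative, with counit the
projection onto the degree-0 component `k[S_0]`. -/
theorem mrCoprod_coassoc_and_counit (k : Type*) [Field k] [CharZero k] :
    (∀ f : MR k,
      (TensorProduct.assoc k (MR k) (MR k) (MR k))
        ((TensorProduct.map (mrCoprodL k) LinearMap.id) (mrCoprodL k f)) =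
      (TensorProduct.map LinearMap.id (mrCoprodL k)) (mrCoprodL k f)) ∧
    (∀ f : MR k,
      (TensorProduct.lid k (MR k))
        ((TensorProduct.map (mrCounit k) LinearMap.id) (mrCoprodL k f)) = f ∧
      (TensorProduct.rid k (MR k))
        ((TensorProduct.map LinearMap.id (mrCounit k)) (mrCoprodL k f)) = f) := by
  constructor
  · intro f
    induction f using Finsupp.induction_linear with
    | zero => simp
    | add f g hf hg => simp only [map_add, hf, hg]
    | single a b =>
      rw [mrCoprodL_single, map_smul, map_smul, map_smul, coassoc_basis]
  · intro f
    induction f using Finsupp.induction_linear with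
    | zero =>
      constructor
      · rw [(mrCoprodL k).map_zero, (TensorProduct.map (mrCounit k) LinearMap.id).map_zero,
          (TensorProduct.lid k (MR k)).map_zero]
      · rw [(mrCoprodL k).map_zero, (TensorProduct.map LinearMap.id (mrCounit k)).map_zero,
          (TensorProduct.rid k (MR k)).map_zero]
    | add f g hf hg =>
      constructor
      · rw [(mrCoprodL k).map_add, (TensorProduct.map (mrCounit k) LinearMap.id).map_add,
          (TensorProduct.lid k (MR k)).map_add, hf.1, hg.1]
      · rw [(mrCoprodL k).map_add, (TensorProduct.map LinearMap.id (mrCounit k)).map_add,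
          (TensorProduct.rid k (MR k)).map_add, hf.2, hg.2]
    | single a b =>
      constructor
      · rw [mrCoprodL_single, map_smul, (TensorProduct.lid k (MR k)).map_smul,
          counit_left_basis, Finsupp.smul_single, smul_eq_mul, mul_one]
      · rw [mrCoprodL_single, map_smul, (TensorProduct.rid k (MR k)).map_smul,
          counit_right_basis, Finsupp.smul_single, smul_eq_mul, mul_one]
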